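/- Let A be a complex Banach algebra, Z : A → ℂ a continuous linear functional, and Ω, b, C ∈ A with Ω·b − b·Ω = −C, Ω·C = C·Ω, and Z((b − C)·a) = 0 for every a ∈ A. Then Z(exp(Ω)·b·x) = 0 for every x ∈ A. (This is the abstract content of Lemma A.2 of the paper: the functional Z^κ{e^{Ω̂} · } acts as a left vacuum on the creation operators, Z^κ{e^{Ω̂} 𝐛*(ζ) X^{(α+1)}} = 0 and Z^κ{e^{Ω̂} 𝐜*(ζ) X^{(α−1)}} = 0, because the JMS theorem gives Z^κ{(𝐛*(ζ) − C(ζ)) e^{Ω̂} X} = 0.) -/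

import Mathlib

open NormedSpace
open scoped Nat

lemma pow_comm_aux {A : Type*} [NormedRing A] [NormedAlgebra ℂ A]
    (Ω b C : A) (h1 : Ω * b - b * Ω = -C) (h2 : Ω * C = C * Ω) :
    ∀ n : ℕ, Ω ^ (n+1) * b - b * Ω ^ (n+1) = -((n+1) • (C * Ω ^ n)) := by
  have hΩb : Ω * b = b * Ω - C := by
    have := sub_eq_iff_eq_add.mp h1
    rw [this]; noncomm_ring
  intro n
  induction n with
  | zero => simp [hΩb]
  | succ n ih =>
    have hstep : Ω ^ (n+1) * b = b * Ω ^ (n+1) - (n+1) • (C * Ω ^ n) := by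
      have := sub_eq_iff_eq_add.mp ih
      rw [this]; noncomm_ring
    have hcomm : Ω * ((n+1) • (C * Ω ^ n)) = (n+1) • (C * Ω ^ (n+1)) := by
      rw [mul_smul_comm, ← mul_assoc, h2, mul_assoc, ← pow_succ']
    have e1 : Ω ^ (n+2) * b = b * Ω ^ (n+2) - C * Ω ^ (n+1) - (n+1) • (C * Ω ^ (n+1)) := by
      calc Ω ^ (n+2) * b = Ω * (Ω ^ (n+1) * b) := by rw [pow_succ', mul_assoc]
        _ = Ω * (b * Ω ^ (n+1)) - Ω * ((n+1) • (C * Ω ^ n)) := by rw [hstep, mul_sub]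
        _ = (Ω * b) * Ω ^ (n+1) - (n+1) • (C * Ω ^ (n+1)) := by rw [hcomm, mul_assoc]
        _ = b * (Ω * Ω ^ (n+1)) - C * Ω ^ (n+1) - (n+1) • (C * Ω ^ (n+1)) := by
            rw [hΩb]; noncomm_ring
        _ = b * Ω ^ (n+2) - C * Ω ^ (n+1) - (n+1) • (C * Ω ^ (n+1)) := by
            rw [← pow_succ']
    rw [e1, succ_nsmul (C * Ω ^ (n+1)) (n+1)]
    abel


/-- Lemma A.2 (abstract form): if `Ω·b − b·Ω = −C`, `Ω·C = C·Ω`, and the continuous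
linear functional `Z` kills `(b − C)·a` for every `a`, then `Z(exp(Ω)·b·x) = 0` for
every `x`. -/
theorem left_vacuum_creation {A : Type*} [NormedRing A] [NormedAlgebra ℂ A]
    [CompleteSpace A] (Z : A →L[ℂ] ℂ) (Ω b C : A)
    (h1 : Ω * b - b * Ω = -C) (h2 : Ω * C = C * Ω)
    (hZ : ∀ a : A, Z ((b - C) * a) = 0) :
    ∀ x : A, Z (exp Ω * b * x) = 0 := by
  have hs : Summable fun n : ℕ => ((n ! : ℂ)⁻¹) • Ω ^ n := by
    simpa using NormedSpace.expSeries_summable' (𝕂 := ℂ) Ω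
  have hexp : exp Ω = ∑' n : ℕ, ((n ! : ℂ)⁻¹) • Ω ^ n := by
    rw [NormedSpace.exp_eq_tsum ℂ]
  -- right multiplication by b
  have hsb : Summable fun n : ℕ => ((n ! : ℂ)⁻¹) • (Ω ^ n * b) := by
    simpa [smul_mul_assoc] using hs.mul_right b
  have hbs : Summable fun n : ℕ => ((n ! : ℂ)⁻¹) • (b * Ω ^ n) := by
    simpa [mul_smul_comm] using hs.mul_left b
  have h1' : exp Ω * b = ∑' n : ℕ, ((n ! : ℂ)⁻¹) • (Ω ^ n * b) := by
    rw [hexp, ← hs.tsum_mul_right]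
    simp [smul_mul_assoc]
  have h2' : b * exp Ω = ∑' n : ℕ, ((n ! : ℂ)⁻¹) • (b * Ω ^ n) := by
    rw [hexp, ← hs.tsum_mul_left]
    simp [mul_smul_comm]
  have h3' : C * exp Ω = ∑' n : ℕ, ((n ! : ℂ)⁻¹) • (C * Ω ^ n) := by
    rw [hexp, ← hs.tsum_mul_left]
    simp [mul_smul_comm]
  -- the difference series
  have hdiff : exp Ω * b - b * exp Ω
      = ∑' n : ℕ, ((n ! : ℂ)⁻¹) • (Ω ^ n * b - b * Ω ^ n) := by
    rw [h1', h2', ← Summable.tsum_sub hsb hbs]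
    simp [smul_sub]
  have hterm : ∀ n : ℕ, ((((n+1)) ! : ℂ)⁻¹) • (Ω ^ (n+1) * b - b * Ω ^ (n+1))
      = -(((n ! : ℂ)⁻¹) • (C * Ω ^ n)) := by
    intro n
    rw [pow_comm_aux Ω b C h1 h2 n, smul_neg, ← Nat.cast_smul_eq_nsmul ℂ, smul_smul]
    congr 2
    have hne : ((n:ℂ)+1) ≠ 0 := Nat.cast_add_one_ne_zero n
    have hfe : ((n ! : ℂ)) ≠ 0 := Nat.cast_ne_zero.mpr n.factorial_ne_zero
    rw [Nat.factorial_succ]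
    push_cast
    field_simp
  have hsum : Summable fun n : ℕ => ((n ! : ℂ)⁻¹) • (Ω ^ n * b - b * Ω ^ n) :=
    hsb.sub hbs |>.congr (fun n => by simp [smul_sub])
  have hkey : exp Ω * b = (b - C) * exp Ω := by
    have hmain : exp Ω * b - b * exp Ω = -(C * exp Ω) := by
      rw [hdiff, Summable.tsum_eq_zero_add hsum]
      simp only [hterm]
      rw [tsum_neg, ← h3']
      simp
    rw [sub_eq_iff_eq_add.mp hmain]
    noncomm_ring
  intro x
  rw [hkey, mul_assoc]
  exact hZ _
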